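/- Let G=(M,E) be a finite tree with |M| ≥ 2 and nonnegative edge weights w, let A ⊆ M with |A| ≥ 2, and let E_A be the set of edges e ∈ E such that each of the two connected components of G with e deleted contains a vertex of A. Then the minimum of Σ_{j∈M} R_j over all A-feasible vectors R equals Σ_{e∈E} w_e − min_{e∈E_A} w_e; that is, every A-feasible R satisfies Σ_{j∈M} R_j ≥ Σ_{e∈E} w_e − min_{e∈E_A} w_e, and there exists an A-feasible R attaining this value. -/

import Mathlib

open scoped Classical

namespace Stmt5Aux

open SimpleGraph Finset

variable {V : Type*}

lemma reach_endpoint_aux {G : SimpleGraph V} {x y : V} :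
    ∀ {v t : V}, G.Walk v t →
      (G.deleteEdges {s(x, y)}).Reachable v t ∨
      (G.deleteEdges {s(x, y)}).Reachable v x ∨
      (G.deleteEdges {s(x, y)}).Reachable v y := by
  intro v t W
  induction W with
  | nil => exact Or.inl (Reachable.refl _)
  | @cons u c _ h W ih =>
    by_cases he : s(u, c) = s(x, y)
    · rw [Sym2.eq_iff] at he
      rcases he with ⟨rfl, rfl⟩ | ⟨rfl, rfl⟩
      · exact Or.inr (Or.inl (Reachable.refl _))
      · exact Or.inr (Or.inr (Reachable.refl _))
    · have hadj : (G.deleteEdges {s(x, y)}).Adj u c :=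
        SimpleGraph.deleteEdges_adj.mpr ⟨h, by simpa using he⟩
      rcases ih with h1 | h1 | h1
      · exact Or.inl (hadj.reachable.trans h1)
      · exact Or.inr (Or.inl (hadj.reachable.trans h1))
      · exact Or.inr (Or.inr (hadj.reachable.trans h1))

/-- After deleting edge `s(x,y)`, any vertex with a walk to `x` can still reach `x` or `y`. -/
lemma reach_endpoint {G : SimpleGraph V} {x y v : V} (W : G.Walk v x) :
    (G.deleteEdges {s(x, y)}).Reachable v x ∨ (G.deleteEdges {s(x, y)}).Reachable v y := by
  rcases reach_endpoint_aux (x := x) (y := y) W with h | h | h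
  · exact Or.inl h
  · exact Or.inl h
  · exact Or.inr h

/-- On a trail from `a ∉ B` to `r ∈ B` there is a crossing edge `s(x,y)`, `x ∉ B`, `y ∈ B`,
with `x` still connected to `a` and `y` still connected to `r` after deleting that edge. -/
lemma exists_crossing {G : SimpleGraph V} {B : Finset V} :
    ∀ {a r : V} (W : G.Walk a r), W.IsTrail → a ∉ B → r ∈ B →
      ∃ x y, G.Adj x y ∧ x ∉ B ∧ y ∈ B ∧ s(x, y) ∈ W.edges ∧
        (G.deleteEdges {s(x, y)}).Reachable x a ∧ (G.deleteEdges {s(x, y)}).Reachable y r := by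
  intro a r W
  induction W with
  | nil => exact fun _ ha hr => absurd hr ha
  | @cons u c _ h W ih =>
    intro ht ha hr
    rw [SimpleGraph.Walk.isTrail_cons] at ht
    by_cases hc : c ∈ B
    · refine ⟨u, c, h, ha, hc, by simp, Reachable.refl _, ?_⟩
      exact (W.toDeleteEdges {s(u, c)}
        (fun e he => by simp only [Set.mem_singleton_iff]; intro hh; exact ht.2 (hh ▸ he))).reachable
    · obtain ⟨x, y, hxy, hxB, hyB, hmem, hxa, hyr⟩ := ih ht.1 hc hr
      have hne : s(u, c) ∉ ({s(x, y)} : Set (Sym2 V)) := by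
        simp only [Set.mem_singleton_iff]
        intro hh
        exact ht.2 (hh ▸ hmem)
      have hadj : (G.deleteEdges {s(x, y)}).Adj u c :=
        SimpleGraph.deleteEdges_adj.mpr ⟨h, by simpa using hne⟩
      exact ⟨x, y, hxy, hxB, hyB, by simp [hmem], hxa.trans hadj.symm.reachable, hyr⟩

/-- An edge of an acyclic graph is a bridge. -/
lemma bridge_not_reach {G : SimpleGraph V} (hacyc : G.IsAcyclic) {x y : V} (h : G.Adj x y) :
    ¬ (G.deleteEdges {s(x, y)}).Reachable x y := by
  have hb := (SimpleGraph.isAcyclic_iff_forall_adj_isBridge.mp hacyc) h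
  rw [SimpleGraph.isBridge_iff] at hb
  exact hb

/-- The first edge of a trail from `a1` to `a2 ≠ a1`. -/
lemma exists_first_edge {G : SimpleGraph V} :
    ∀ {a1 a2 : V} (W : G.Walk a1 a2), W.IsTrail → a1 ≠ a2 →
      ∃ c, G.Adj a1 c ∧ (G.deleteEdges {s(a1, c)}).Reachable c a2 := by
  intro a1 a2 W
  cases W with
  | nil => exact fun _ hne => absurd rfl hne
  | cons h W' =>
    intro ht _
    rw [SimpleGraph.Walk.isTrail_cons] at ht
    exact ⟨_, h, (W'.toDeleteEdges _ (fun e he => by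
      simp only [Set.mem_singleton_iff]; intro hh; exact ht.2 (hh ▸ he))).reachable⟩

end Stmt5Aux

theorem stmt_5 {V : Type*} [Fintype V] (G : SimpleGraph V) (hT : G.IsTree)
    (hcard : 2 ≤ Fintype.card V)
    (w : Sym2 V → ℝ) (hw : ∀ e ∈ G.edgeFinset, 0 ≤ w e)
    (A : Finset V) (hA : 2 ≤ A.card)
    (EA : Set (Sym2 V))
    (hEA : EA = {e : Sym2 V | e ∈ G.edgeSet ∧
      ∀ v ∈ e, ∃ a ∈ A, (G.deleteEdges {e}).Reachable v a}) :
    (∀ R : V → ℝ, (∀ j, 0 ≤ R j) →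
      (∀ B : Finset V, B ⊂ Finset.univ → ¬ A ⊆ B →
        ∑ e ∈ G.edgeFinset.filter (fun e => ∀ v ∈ e, v ∈ B), w e ≤ ∑ j ∈ B, R j) →
      (∑ e ∈ G.edgeFinset, w e) - sInf (w '' EA) ≤ ∑ j, R j) ∧
    (∃ R : V → ℝ, (∀ j, 0 ≤ R j) ∧
      (∀ B : Finset V, B ⊂ Finset.univ → ¬ A ⊆ B →
        ∑ e ∈ G.edgeFinset.filter (fun e => ∀ v ∈ e, v ∈ B), w e ≤ ∑ j ∈ B, R j) ∧
      ∑ j, R j = (∑ e ∈ G.edgeFinset, w e) - sInf (w '' EA)) := by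
  classical
  open SimpleGraph Finset in
  have hconn : G.Connected := hT.isConnected
  have hacyc : G.IsAcyclic := hT.IsAcyclic
  obtain ⟨a1, ha1, a2, ha2, hne12⟩ := Finset.one_lt_card.mp hA
  -- `EA` is nonempty
  have hEAne : EA.Nonempty := by
    obtain ⟨W0⟩ := hconn.preconnected a1 a2
    obtain ⟨c, hadj, hreach⟩ :=
      Stmt5Aux.exists_first_edge W0.toPath.1 W0.toPath.2.isTrail hne12
    refine ⟨s(a1, c), ?_⟩
    rw [hEA]
    refine ⟨hadj, ?_⟩
    intro v hv
    rw [Sym2.mem_iff] at hv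
    rcases hv with h | h
    · exact ⟨a1, ha1, by rw [h]⟩
    · exact ⟨a2, ha2, by rw [h]; exact hreach⟩
  have hEAfin : EA.Finite := Set.toFinite EA
  have hSne : (w '' EA).Nonempty := hEAne.image w
  have hSfin : (w '' EA).Finite := hEAfin.image w
  obtain ⟨estar0, hestarEA, hestarw⟩ := hSne.csInf_mem hSfin
  have hlb : ∀ e ∈ EA, sInf (w '' EA) ≤ w e := fun e he =>
    csInf_le hSfin.bddBelow (Set.mem_image_of_mem w he)
  obtain ⟨r, s', rfl⟩ : ∃ r s', estar0 = s(r, s') := by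
    clear hestarEA hestarw
    induction estar0 using Sym2.ind with
    | _ x y => exact ⟨x, y, rfl⟩
  rw [hEA] at hestarEA
  obtain ⟨hestarE, hestarreach⟩ := hestarEA
  have hadj : G.Adj r s' := hestarE
  obtain ⟨ar, harA, harreach⟩ := hestarreach r (Sym2.mem_mk_left r s')
  obtain ⟨as', hasA, hasreach⟩ := hestarreach s' (Sym2.mem_mk_right r s')
  have hbr : ¬ (G.deleteEdges {s(r, s')}).Reachable r s' :=
    Stmt5Aux.bridge_not_reach hacyc hadj
  have hcover : ∀ v : V, (G.deleteEdges {s(r, s')}).Reachable v r ∨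
      (G.deleteEdges {s(r, s')}).Reachable v s' :=
    fun v => Stmt5Aux.reach_endpoint (y := s') (hconn.preconnected v r).some
  have hdadj : ∀ {u1 u2 : V}, G.Adj u1 u2 → s(u1, u2) ≠ s(r, s') →
      (G.deleteEdges {s(r, s')}).Adj u1 u2 := by
    intro u1 u2 h hne
    exact SimpleGraph.deleteEdges_adj.mpr ⟨h, by simpa using hne⟩
  constructor
  · -- lower bound
    intro R hR0 hfeas
    set Bp : Finset V :=
      Finset.univ.filter (fun v => (G.deleteEdges {s(r, s')}).Reachable v r) with hBp
    set Bn : Finset V :=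
      Finset.univ.filter (fun v => ¬ (G.deleteEdges {s(r, s')}).Reachable v r) with hBn
    have hmemBp : ∀ v, v ∈ Bp ↔ (G.deleteEdges {s(r, s')}).Reachable v r := by
      intro v; simp [hBp]
    have hmemBn : ∀ v, v ∈ Bn ↔ ¬ (G.deleteEdges {s(r, s')}).Reachable v r := by
      intro v; simp [hBn]
    have hrBp : r ∈ Bp := (hmemBp r).mpr (SimpleGraph.Reachable.refl _)
    have hs'Bp : s' ∉ Bp := fun h => hbr ((hmemBp s').mp h).symm
    have hs'Bn : s' ∈ Bn := (hmemBn s').mpr (fun h => hbr h.symm)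
    have hrBn : r ∉ Bn := fun h => (hmemBn r).mp h (SimpleGraph.Reachable.refl _)
    have hBpss : Bp ⊂ Finset.univ :=
      Finset.ssubset_univ_iff.mpr (fun h => hs'Bp (by rw [h]; exact Finset.mem_univ s'))
    have hBnss : Bn ⊂ Finset.univ :=
      Finset.ssubset_univ_iff.mpr (fun h => hrBn (by rw [h]; exact Finset.mem_univ r))
    have hABp : ¬ A ⊆ Bp := fun hsub =>
      hbr (hasreach.trans ((hmemBp as').mp (hsub hasA))).symm
    have hABn : ¬ A ⊆ Bn := fun hsub => (hmemBn ar).mp (hsub harA) harreach.symm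
    have h1 := hfeas Bp hBpss hABp
    have h2 := hfeas Bn hBnss hABn
    have sumR : ∑ j ∈ Bp, R j + ∑ j ∈ Bn, R j = ∑ j, R j := by
      rw [hBp, hBn]
      exact Finset.sum_filter_add_sum_filter_not _ _ _
    have hE1 : G.edgeFinset.filter (fun e => ∀ v ∈ e, v ∈ Bp)
        = (G.edgeFinset.erase s(r, s')).filter (fun e => ∀ v ∈ e, v ∈ Bp) := by
      ext e
      simp only [Finset.mem_filter, Finset.mem_erase]
      constructor
      · rintro ⟨he, hP⟩
        refine ⟨⟨?_, he⟩, hP⟩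
        intro hh
        exact hs'Bp (hP s' (by rw [hh]; exact Sym2.mem_mk_right r s'))
      · rintro ⟨⟨_, he⟩, hP⟩; exact ⟨he, hP⟩
    have hE2 : G.edgeFinset.filter (fun e => ∀ v ∈ e, v ∈ Bn)
        = (G.edgeFinset.erase s(r, s')).filter (fun e => ¬ ∀ v ∈ e, v ∈ Bp) := by
      ext e
      induction e using Sym2.ind with
      | _ u1 u2 =>
        simp only [Finset.mem_filter, Finset.mem_erase, SimpleGraph.mem_edgeFinset,
          SimpleGraph.mem_edgeSet]
        constructor
        · rintro ⟨hadj12, hP⟩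
          have hu1Bn : u1 ∈ Bn := hP u1 (Sym2.mem_mk_left u1 u2)
          have hne : s(u1, u2) ≠ s(r, s') := by
            intro hh; rw [Sym2.eq_iff] at hh
            rcases hh with ⟨rfl, rfl⟩ | ⟨rfl, rfl⟩
            · exact hrBn hu1Bn
            · exact hrBn (hP u2 (Sym2.mem_mk_right u1 u2))
          refine ⟨⟨hne, hadj12⟩, ?_⟩
          intro hall
          exact (hmemBn u1).mp hu1Bn ((hmemBp u1).mp (hall u1 (Sym2.mem_mk_left u1 u2)))
        · rintro ⟨⟨hne, hadj12⟩, hnall⟩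
          refine ⟨hadj12, ?_⟩
          have hd : (G.deleteEdges {s(r, s')}).Adj u1 u2 := hdadj hadj12 hne
          have hiff : (G.deleteEdges {s(r, s')}).Reachable u1 r ↔
              (G.deleteEdges {s(r, s')}).Reachable u2 r :=
            ⟨fun h => hd.symm.reachable.trans h, fun h => hd.reachable.trans h⟩
          have hnotu1 : ¬ (G.deleteEdges {s(r, s')}).Reachable u1 r := by
            intro h
            apply hnall
            intro v' hv'
            rw [Sym2.mem_iff] at hv'
            rcases hv' with rfl | rfl
            · exact (hmemBp v').mpr h
            · exact (hmemBp v').mpr (hiff.mp h)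
          intro v hv
          rw [Sym2.mem_iff] at hv
          rcases hv with rfl | rfl
          · exact (hmemBn v).mpr hnotu1
          · exact (hmemBn v).mpr (fun h => hnotu1 (hiff.mpr h))
    have hedgesum : ∑ e ∈ G.edgeFinset.filter (fun e => ∀ v ∈ e, v ∈ Bp), w e
        + ∑ e ∈ G.edgeFinset.filter (fun e => ∀ v ∈ e, v ∈ Bn), w e
        = ∑ e ∈ G.edgeFinset, w e - w s(r, s') := by
      rw [hE1, hE2, Finset.sum_filter_add_sum_filter_not,
        Finset.sum_erase_eq_sub (SimpleGraph.mem_edgeFinset.mpr hestarE)]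
    rw [← hestarw]
    linarith
  · -- construction of an optimal `R`
    have hex : ∀ e : Sym2 V, ∃ v, v ∈ e ∧ (G.deleteEdges {e}).Reachable v r := by
      intro e
      induction e using Sym2.ind with
      | _ u1 u2 =>
        rcases Stmt5Aux.reach_endpoint (y := u2) (hconn.preconnected r u1).some with h | h
        · exact ⟨u1, Sym2.mem_mk_left u1 u2, h.symm⟩
        · exact ⟨u2, Sym2.mem_mk_right u1 u2, h.symm⟩
    choose pf hpf1 hpf2 using hex
    set D : Finset (Sym2 V) := G.edgeFinset.erase s(r, s') with hD
    set R : V → ℝ := fun j => ∑ e ∈ D.filter (fun e => pf e = j), w e with hRdef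
    have hwD : ∀ e ∈ D, 0 ≤ w e := fun e he => hw e (Finset.mem_of_mem_erase he)
    refine ⟨R, ?_, ?_, ?_⟩
    · intro j
      simp only [hRdef]
      exact Finset.sum_nonneg (fun e he => hwD e (Finset.mem_filter.mp he).1)
    · -- feasibility
      intro B hBs hAB
      obtain ⟨a, haA, haB⟩ := Finset.not_subset.mp hAB
      have hsplit : ∑ j ∈ B, R j = ∑ e ∈ D.filter (fun e => pf e ∈ B), w e := by
        simp only [hRdef]
        rw [← Finset.sum_fiberwise_of_maps_to (g := pf) (t := B)
          (s := D.filter (fun e => pf e ∈ B)) (fun e he => (Finset.mem_filter.mp he).2) w]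
        refine Finset.sum_congr rfl (fun j hj => ?_)
        refine Finset.sum_congr ?_ (fun _ _ => rfl)
        ext e
        simp only [Finset.mem_filter]
        constructor
        · rintro ⟨heD, hpe⟩; exact ⟨⟨heD, by rw [hpe]; exact hj⟩, hpe⟩
        · rintro ⟨⟨heD, _⟩, hpe⟩; exact ⟨heD, hpe⟩
      rw [hsplit]
      set IB := G.edgeFinset.filter (fun e => ∀ v ∈ e, v ∈ B) with hIB
      have hsub : IB.erase s(r, s') ⊆ D.filter (fun e => pf e ∈ B) := by
        intro e he
        rw [Finset.mem_erase] at he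
        obtain ⟨hene, heIB⟩ := he
        rw [hIB, Finset.mem_filter] at heIB
        exact Finset.mem_filter.mpr
          ⟨Finset.mem_erase.mpr ⟨hene, heIB.1⟩, heIB.2 _ (hpf1 e)⟩
      by_cases hin : s(r, s') ∈ IB
      · -- the minimal edge is inside B : find a compensating crossing edge
        have hrB : r ∈ B :=
          (Finset.mem_filter.mp hin).2 r (Sym2.mem_mk_left r s')
        have hs'B : s' ∈ B :=
          (Finset.mem_filter.mp hin).2 s' (Sym2.mem_mk_right r s')
        obtain ⟨W0⟩ := hconn.preconnected a r
        obtain ⟨x, y, hxy, hxB, hyB, _, hxa, hyr⟩ :=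
          Stmt5Aux.exists_crossing W0.toPath.1 W0.toPath.2.isTrail haB hrB
        have hfE : s(x, y) ∈ G.edgeSet := hxy
        have hfne : s(x, y) ≠ s(r, s') := by
          intro hh
          rw [Sym2.eq_iff] at hh
          rcases hh with ⟨rfl, rfl⟩ | ⟨rfl, rfl⟩
          · exact hxB hrB
          · exact hxB hs'B
        have hbrf : ¬ (G.deleteEdges {s(x, y)}).Reachable x y :=
          Stmt5Aux.bridge_not_reach hacyc hxy
        have hpfy : pf s(x, y) = y := by
          have h1 := hpf1 s(x, y)
          have h2 := hpf2 s(x, y)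
          rw [Sym2.mem_iff] at h1
          rcases h1 with h1 | h1
          · exfalso
            rw [h1] at h2
            exact hbrf (h2.trans hyr.symm)
          · exact h1
        have hfEA : s(x, y) ∈ EA := by
          rw [hEA]
          refine ⟨hfE, ?_⟩
          intro v hv
          rw [Sym2.mem_iff] at hv
          rcases hv with rfl | rfl
          · exact ⟨a, haA, hxa⟩
          · rcases Stmt5Aux.reach_endpoint (y := v) (hconn.preconnected ar x).some
              with h1 | h1
            swap
            · exact ⟨ar, harA, h1.symm⟩
            rcases Stmt5Aux.reach_endpoint (y := v) (hconn.preconnected as' x).some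
              with h2 | h2
            swap
            · exact ⟨as', hasA, h2.symm⟩
            exfalso
            obtain ⟨Wf⟩ : (G.deleteEdges {s(x, v)}).Reachable ar as' := h1.trans h2.symm
            by_cases hst : s(r, s') ∈ Wf.edges
            · have hrsup : r ∈ Wf.support := Wf.fst_mem_support_of_mem_edges hst
              have hreach : (G.deleteEdges {s(x, v)}).Reachable ar r :=
                (Wf.takeUntil r hrsup).reachable
              exact hbrf (h1.symm.trans (hreach.trans hyr.symm))
            · have hWedges : ∀ e ∈ Wf.edges, e ∈ (G.deleteEdges {s(r, s')}).edgeSet := by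
                intro e he
                have heG : e ∈ (G.deleteEdges {s(x, v)}).edgeSet := Wf.edges_subset_edgeSet he
                rw [SimpleGraph.edgeSet_deleteEdges] at heG ⊢
                refine ⟨heG.1, ?_⟩
                intro hh
                rw [Set.mem_singleton_iff] at hh
                exact hst (hh ▸ he)
              have hreach2 : (G.deleteEdges {s(r, s')}).Reachable ar as' :=
                (Wf.transfer _ hWedges).reachable
              exact hbr ((harreach.trans hreach2).trans hasreach.symm)
        have hwf : w s(r, s') ≤ w s(x, y) := by
          rw [hestarw]
          exact hlb _ hfEA
        have hfD : s(x, y) ∈ D.filter (fun e => pf e ∈ B) :=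
          Finset.mem_filter.mpr
            ⟨Finset.mem_erase.mpr ⟨hfne, SimpleGraph.mem_edgeFinset.mpr hfE⟩,
             by rw [hpfy]; exact hyB⟩
        have hfnotIB : s(x, y) ∉ IB.erase s(r, s') := by
          intro hh
          exact hxB ((Finset.mem_filter.mp (Finset.mem_of_mem_erase hh)).2 x
            (Sym2.mem_mk_left x y))
        have hIns : insert s(x, y) (IB.erase s(r, s')) ⊆ D.filter (fun e => pf e ∈ B) := by
          intro e he
          rcases Finset.mem_insert.mp he with rfl | he
          · exact hfD
          · exact hsub he
        have hsum1 : ∑ e ∈ IB.erase s(r, s'), w e = ∑ e ∈ IB, w e - w s(r, s') :=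
          Finset.sum_erase_eq_sub hin
        have hsum2 : ∑ e ∈ insert s(x, y) (IB.erase s(r, s')), w e
            = w s(x, y) + ∑ e ∈ IB.erase s(r, s'), w e := Finset.sum_insert hfnotIB
        have hsum3 : ∑ e ∈ insert s(x, y) (IB.erase s(r, s')), w e
            ≤ ∑ e ∈ D.filter (fun e => pf e ∈ B), w e :=
          Finset.sum_le_sum_of_subset_of_nonneg hIns
            (fun e he _ => hwD e (Finset.mem_filter.mp he).1)
        linarith
      · have hIBer : IB = IB.erase s(r, s') := (Finset.erase_eq_of_notMem hin).symm
        calc ∑ e ∈ IB, w e = ∑ e ∈ IB.erase s(r, s'), w e := by rw [← hIBer]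
          _ ≤ ∑ e ∈ D.filter (fun e => pf e ∈ B), w e :=
            Finset.sum_le_sum_of_subset_of_nonneg hsub
              (fun e he _ => hwD e (Finset.mem_filter.mp he).1)
    · -- total sum
      simp only [hRdef]
      rw [Finset.sum_fiberwise_of_maps_to (fun e _ => Finset.mem_univ (pf e)) w, hD,
        Finset.sum_erase_eq_sub (SimpleGraph.mem_edgeFinset.mpr hestarE), hestarw]
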